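/- For every integer n ≥ 3, the positive co-degree Turán number of F₃,₃ satisfies 3·⌊n/5⌋ ≤ co⁺ex(n, F₃,₃) ≤ (3/4)·n. -/

import Mathlib

open Finset

/-- The co-degree of a vertex set `S` in the hypergraph with edge set `E`:
the number of edges containing `S`. -/
def coDeg {n : ℕ} (E : Finset (Finset (Fin n))) (S : Finset (Fin n)) : ℕ :=
  (E.filter (fun e => S ⊆ e)).card

/-- The minimum positive co-degree `δ⁺_{r-1}` of an `r`-graph on `Fin n` with edge set `E`:
the largest `k` such that every `(r-1)`-set of vertices contained in at least one edge is
contained in at least `k` edges (i.e. the minimum of the positive co-degrees). -/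
noncomputable def minPosCoDeg (r n : ℕ) (E : Finset (Finset (Fin n))) : ℕ :=
  sInf {d : ℕ | ∃ S : Finset (Fin n), S.card = r - 1 ∧ coDeg E S = d ∧ 0 < d}

/-- `E` contains a copy of `F`: an injection of the vertices of `F` mapping
edges of `F` to edges of `E`. -/
def Contains {α β : Type*} [DecidableEq α] [DecidableEq β]
    (F : Finset (Finset α)) (E : Finset (Finset β)) : Prop :=
  ∃ f : α → β, Function.Injective f ∧ ∀ e ∈ F, e.image f ∈ E

/-- The positive co-degree Turán number `co⁺ex_r(n, F)`: the maximum of the minimum positive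
co-degree over all `F`-free `r`-graphs on `n` vertices with at least one edge. -/
noncomputable def coPlusEx {α : Type*} [DecidableEq α] (r n : ℕ) (F : Finset (Finset α)) : ℕ :=
  sSup {d : ℕ | ∃ E : Finset (Finset (Fin n)),
    (∀ e ∈ E, e.card = r) ∧ E.Nonempty ∧ ¬ Contains F E ∧ minPosCoDeg r n E = d}


def K4minus : Finset (Finset (Fin 4)) := {{0,1,2}, {0,1,3}, {0,2,3}}

def K4 : Finset (Finset (Fin 4)) := {{0,1,2}, {0,1,3}, {0,2,3}, {1,2,3}}

def F5 : Finset (Finset (Fin 5)) := {{0,1,2}, {0,1,3}, {2,3,4}}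

def F32 : Finset (Finset (Fin 5)) := {{0,1,2}, {0,3,4}, {1,3,4}, {2,3,4}}

def Fano : Finset (Finset (Fin 7)) :=
  {{0,1,2}, {2,3,4}, {0,4,5}, {1,3,5}, {0,3,6}, {1,4,6}, {2,5,6}}

def F33 : Finset (Finset (Fin 6)) :=
  {{0,1,2}, {0,3,4}, {0,3,5}, {0,4,5}, {1,3,4}, {1,3,5}, {1,4,5}, {2,3,4}, {2,3,5}, {2,4,5}}

def C5 : Finset (Finset (Fin 5)) := {{0,1,2}, {1,2,3}, {2,3,4}, {0,3,4}, {0,1,4}}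

def C5minus : Finset (Finset (Fin 5)) := {{0,1,2}, {1,2,3}, {2,3,4}, {0,3,4}}

def K222 : Finset (Finset (Fin 6)) :=
  {{0,2,4}, {0,2,5}, {0,3,4}, {0,3,5}, {1,2,4}, {1,2,5}, {1,3,4}, {1,3,5}}

/-- `J k`: the 3-graph on `k+1` vertices whose edges are all triples containing the
distinguished vertex `0`. -/
def Jgraph (k : ℕ) : Finset (Finset (Fin (k+1))) :=
  (Finset.univ.powersetCard 3).filter (fun e => (0 : Fin (k+1)) ∈ e)

/-- `E` is (isomorphic to) the complete balanced `k`-partite 3-graph on `n` vertices: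
there is a partition of the vertices into `k` classes whose sizes differ by at most one,
such that the edges are exactly the triples of vertices in three pairwise distinct classes. -/
def IsCompleteBalancedMultipartite (n k : ℕ) (E : Finset (Finset (Fin n))) : Prop :=
  ∃ f : Fin n → Fin k,
    (∀ i j : Fin k, (Finset.univ.filter (fun v => f v = i)).card ≤
      (Finset.univ.filter (fun v => f v = j)).card + 1) ∧
    ∀ e : Finset (Fin n), e ∈ E ↔ (e.card = 3 ∧ (e.image f).card = 3)

/-- The unique (6,3,2)-design `H₆`. -/
def H6 : Finset (Finset (Fin 6)) :=
  {{0,1,2}, {0,1,3}, {2,3,4}, {2,3,5}, {0,4,5}, {1,4,5}, {0,2,4}, {0,3,5}, {1,2,5}, {1,3,4}}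

/-- `E` is (isomorphic to) a balanced blow-up of `H₆` on `n` vertices: the vertices are
partitioned into six classes of equal size, and the edges are exactly the triples whose
three vertices lie in classes forming an edge of `H₆`. -/
def IsBalancedH6Blowup (n : ℕ) (E : Finset (Finset (Fin n))) : Prop :=
  ∃ f : Fin n → Fin 6,
    (∀ i j : Fin 6, (Finset.univ.filter (fun v => f v = i)).card =
      (Finset.univ.filter (fun v => f v = j)).card) ∧
    ∀ e : Finset (Fin n), e ∈ E ↔ (e.card = 3 ∧ e.image f ∈ H6)

section Aux
variable {n : ℕ}

/-- the set of co-neighbors of the pair x,y -/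
def nset (E : Finset (Finset (Fin n))) (x y : Fin n) : Finset (Fin n) :=
  Finset.univ.filter (fun w => ({x, y, w} : Finset (Fin n)) ∈ E)

lemma mem_nset {E : Finset (Finset (Fin n))} {x y w : Fin n} :
    w ∈ nset E x y ↔ ({x, y, w} : Finset (Fin n)) ∈ E := by
  simp [nset]

lemma triple_rot {α : Type*} [DecidableEq α] (a b c : α) :
    ({a, b, c} : Finset α) = {b, c, a} := by
  ext x; simp; tauto

lemma triple_swap {α : Type*} [DecidableEq α] (a b c : α) :
    ({a, b, c} : Finset α) = {a, c, b} := by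
  ext x; simp; tauto

lemma triple_distinct {E : Finset (Finset (Fin n))} (h3 : ∀ e ∈ E, e.card = 3)
    {x y w : Fin n} (h : ({x, y, w} : Finset (Fin n)) ∈ E) :
    x ≠ y ∧ x ≠ w ∧ y ≠ w := by
  have hc := h3 _ h
  refine ⟨?_, ?_, ?_⟩ <;> rintro rfl
  · rw [show ({x, x, w} : Finset (Fin n)) = {x, w} by ext a; simp; try tauto] at hc
    have := Finset.card_insert_le x ({w} : Finset (Fin n))
    simp at this <;> omega
  · rw [show ({x, y, x} : Finset (Fin n)) = {x, y} by ext a; simp; try tauto] at hc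
    have := Finset.card_insert_le x ({y} : Finset (Fin n))
    simp at this <;> omega
  · rw [show ({x, y, y} : Finset (Fin n)) = {x, y} by ext a; simp; try tauto] at hc
    have := Finset.card_insert_le x ({y} : Finset (Fin n))
    simp at this <;> omega

lemma covered_of_mem {E : Finset (Finset (Fin n))} {x y w : Fin n}
    (h : ({x, y, w} : Finset (Fin n)) ∈ E) : 0 < coDeg E {x, y} := by
  rw [coDeg, Finset.card_pos]
  exact ⟨{x, y, w}, Finset.mem_filter.2 ⟨h, by intro a ha; simp at ha ⊢; tauto⟩⟩

lemma card_nset {E : Finset (Finset (Fin n))} (h3 : ∀ e ∈ E, e.card = 3)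
    {x y : Fin n} (hxy : x ≠ y) : (nset E x y).card = coDeg E {x, y} := by
  rw [coDeg]
  apply Finset.card_bij (fun w _ => ({x, y, w} : Finset (Fin n)))
  · intro w hw
    rw [mem_nset] at hw
    exact Finset.mem_filter.2 ⟨hw, by intro a ha; simp at ha ⊢; tauto⟩
  · intro w hw w' hw' hww
    rw [mem_nset] at hw hw'
    obtain ⟨-, hxw, hyw⟩ := triple_distinct h3 hw
    have : w ∈ ({x, y, w'} : Finset (Fin n)) := by rw [← hww]; simp
    simp at this
    tauto
  · intro e he
    rw [Finset.mem_filter] at he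
    obtain ⟨heE, hsub⟩ := he
    have hx : x ∈ e := hsub (by simp)
    have hy : y ∈ e := hsub (by simp)
    have hcard : (e \ {x, y}).card = 1 := by
      rw [Finset.card_sdiff_of_subset (by intro a ha; simp at ha; rcases ha with rfl | rfl <;> assumption)]
      rw [h3 _ heE, Finset.card_pair hxy]
    obtain ⟨w, hw⟩ := Finset.card_eq_one.1 hcard
    have hwe : w ∈ e ∧ ¬(w = x ∨ w = y) := by
      have : w ∈ e \ {x, y} := by rw [hw]; simp
      simpa using this
    have key : ({x, y, w} : Finset (Fin n)) = e := by
      apply Finset.eq_of_subset_of_card_le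
      · intro a ha; simp at ha; rcases ha with rfl | rfl | rfl <;> [exact hx; exact hy; exact hwe.1]
      · rw [h3 _ heE]
        rw [Finset.card_insert_of_notMem (by simp; tauto),
          Finset.card_insert_of_notMem (by simp; tauto), Finset.card_singleton]
    exact ⟨w, mem_nset.2 (key ▸ heE), key⟩

end Aux

section Upper
variable {n : ℕ}

lemma two_inter (A B : Finset (Fin n)) : A.card + B.card ≤ (A ∩ B).card + n := by
  have h1 := Finset.card_inter_add_card_union A B
  have h2 : (A ∪ B).card ≤ n := by
    have := Finset.card_le_univ (A ∪ B)
    simpa using this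
  omega

lemma upper_bound (E : Finset (Finset (Fin n))) (h3 : ∀ e ∈ E, e.card = 3)
    (hne : E.Nonempty) (hfree : ¬ Contains F33 E) :
    4 * minPosCoDeg 3 n E ≤ 3 * n := by
  by_contra hcon
  push_neg at hcon
  set δ := minPosCoDeg 3 n E with hd
  have hδ : 3 * n + 1 ≤ 4 * δ := hcon
  have hbig : ∀ x y : Fin n, x ≠ y → 0 < coDeg E {x, y} → δ ≤ (nset E x y).card := by
    intro x y hxy hpos
    rw [card_nset h3 hxy]
    apply Nat.sInf_le
    exact ⟨{x, y}, by rw [Finset.card_pair hxy], rfl, hpos⟩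
  obtain ⟨e0, he0⟩ := hne
  obtain ⟨x, y, z, hxy, hxz, hyz, rfl⟩ := Finset.card_eq_three.1 (h3 _ he0)
  have hexz : ({x, z, y} : Finset (Fin n)) ∈ E := by
    rw [triple_swap x z y]; exact he0
  have heyz : ({y, z, x} : Finset (Fin n)) ∈ E := by
    rw [← triple_rot x y z]; exact he0
  have hNXY : δ ≤ (nset E x y).card := hbig x y hxy (covered_of_mem he0)
  have hNXZ : δ ≤ (nset E x z).card := hbig x z hxz (covered_of_mem hexz)
  have hNYZ : δ ≤ (nset E y z).card := hbig y z hyz (covered_of_mem heyz)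
  have i1 := two_inter (nset E x y) (nset E x z)
  have i2 := two_inter (nset E x y ∩ nset E x z) (nset E y z)
  obtain ⟨u, hu⟩ : (nset E x y ∩ nset E x z ∩ nset E y z).Nonempty :=
    Finset.card_pos.1 (by omega)
  simp only [Finset.mem_inter] at hu
  obtain ⟨⟨huXY, huXZ⟩, huYZ⟩ := hu
  rw [mem_nset] at huXY huXZ huYZ
  obtain ⟨-, hxu, hyu⟩ := triple_distinct h3 huXY
  obtain ⟨-, -, hzu⟩ := triple_distinct h3 huXZ
  have hexu : ({x, u, y} : Finset (Fin n)) ∈ E := by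
    rw [triple_swap x u y]; exact huXY
  have hNXU : δ ≤ (nset E x u).card := hbig x u hxu (covered_of_mem hexu)
  have i3 := two_inter (nset E x y ∩ nset E x z ∩ nset E y z) (nset E x u)
  obtain ⟨v, hv⟩ : (nset E x y ∩ nset E x z ∩ nset E y z ∩ nset E x u).Nonempty :=
    Finset.card_pos.1 (by omega)
  simp only [Finset.mem_inter] at hv
  obtain ⟨⟨⟨hvXY, hvXZ⟩, hvYZ⟩, hvXU⟩ := hv
  rw [mem_nset] at hvXY hvXZ hvYZ hvXU
  obtain ⟨-, hxv, hyv⟩ := triple_distinct h3 hvXY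
  obtain ⟨-, -, hzv⟩ := triple_distinct h3 hvXZ
  obtain ⟨-, -, huv⟩ := triple_distinct h3 hvXU
  have heuv : ({u, v, x} : Finset (Fin n)) ∈ E := by
    rw [← triple_rot x u v]; exact hvXU
  have hNUV : δ ≤ (nset E u v).card := hbig u v huv (covered_of_mem heuv)
  have i4 := two_inter (nset E x y ∩ nset E x z ∩ nset E y z) (nset E u v)
  obtain ⟨w, hw⟩ : (nset E x y ∩ nset E x z ∩ nset E y z ∩ nset E u v).Nonempty :=
    Finset.card_pos.1 (by omega)
  simp only [Finset.mem_inter] at hw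
  obtain ⟨⟨⟨hwXY, hwXZ⟩, hwYZ⟩, hwUV⟩ := hw
  rw [mem_nset] at hwXY hwXZ hwYZ hwUV
  obtain ⟨-, hxw, hyw⟩ := triple_distinct h3 hwXY
  obtain ⟨-, -, hzw⟩ := triple_distinct h3 hwXZ
  obtain ⟨-, huw, hvw⟩ := triple_distinct h3 hwUV
  -- the ten edges of the copy of F33, in image orientation
  have H1 : ({u, v, w} : Finset (Fin n)) ∈ E := hwUV
  have H2 : ({u, x, y} : Finset (Fin n)) ∈ E := by
    rw [triple_rot u x y]; exact huXY
  have H3 : ({u, x, z} : Finset (Fin n)) ∈ E := by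
    rw [triple_rot u x z]; exact huXZ
  have H4 : ({u, y, z} : Finset (Fin n)) ∈ E := by
    rw [triple_rot u y z]; exact huYZ
  have H5 : ({v, x, y} : Finset (Fin n)) ∈ E := by
    rw [triple_rot v x y]; exact hvXY
  have H6 : ({v, x, z} : Finset (Fin n)) ∈ E := by
    rw [triple_rot v x z]; exact hvXZ
  have H7 : ({v, y, z} : Finset (Fin n)) ∈ E := by
    rw [triple_rot v y z]; exact hvYZ
  have H8 : ({w, x, y} : Finset (Fin n)) ∈ E := by
    rw [triple_rot w x y]; exact hwXY
  have H9 : ({w, x, z} : Finset (Fin n)) ∈ E := by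
    rw [triple_rot w x z]; exact hwXZ
  have H10 : ({w, y, z} : Finset (Fin n)) ∈ E := by
    rw [triple_rot w y z]; exact hwYZ
  apply hfree
  refine ⟨![u, v, w, x, y, z], ?_, ?_⟩
  · intro i j hij
    fin_cases i <;> fin_cases j <;>
      first
        | rfl
        | (exact absurd hij (by assumption))
        | (exact absurd hij.symm (by assumption))
  · intro e he
    simp only [F33, Finset.mem_insert, Finset.mem_singleton] at he
    rcases he with rfl | rfl | rfl | rfl | rfl | rfl | rfl | rfl | rfl | rfl <;>
      (simp [Finset.image_insert, Finset.image_singleton]; assumption)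

end Upper

section Lower

/-- Blow-up of the complete 3-graph `K₅⁽³⁾` with parts of size `k` (plus isolated leftover
vertices): vertex `v` with `v < 5k` lies in part `v / k`. -/
def blowE (n k : ℕ) : Finset (Finset (Fin n)) :=
  (Finset.univ.powersetCard 3).filter
    (fun e => (∀ v ∈ e, (v : ℕ) < 5 * k) ∧ (e.image (fun v : Fin n => (v : ℕ) / k)).card = 3)

variable {n k : ℕ}

lemma blow_card : ∀ e ∈ blowE n k, e.card = 3 := by
  intro e he
  rw [blowE, Finset.mem_filter, Finset.mem_powersetCard_univ] at he
  exact he.1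

lemma blow_mem {e : Finset (Fin n)} (he : e ∈ blowE n k) :
    e.card = 3 ∧ (∀ v ∈ e, (v : ℕ) < 5 * k) ∧
      Set.InjOn (fun v : Fin n => (v : ℕ) / k) e := by
  rw [blowE, Finset.mem_filter, Finset.mem_powersetCard_univ] at he
  obtain ⟨h1, h2, h3⟩ := he
  exact ⟨h1, h2, Finset.card_image_iff.1 (by rw [h3, h1])⟩

lemma blow_free (hk : 0 < k) : ¬ Contains F33 (blowE n k) := by
  rintro ⟨f, hf, hmap⟩
  have key : ∀ s : Finset (Fin 6), s ∈ F33 → ∀ i ∈ s, ∀ j ∈ s, i ≠ j →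
      (f i : ℕ) / k ≠ (f j : ℕ) / k ∧ (f i : ℕ) / k < 5 := by
    intro s hs i hi j hj hij
    obtain ⟨hcard, hlt, hinj⟩ := blow_mem (hmap s hs)
    have hfi : f i ∈ s.image f := Finset.mem_image_of_mem f hi
    have hfj : f j ∈ s.image f := Finset.mem_image_of_mem f hj
    constructor
    · intro hdiv
      exact hij (hf (hinj hfi hfj hdiv))
    · exact (Nat.div_lt_iff_lt_mul hk).2 (by have := hlt _ hfi; omega)
  have k01 := key {0,1,2} (by decide) 0 (by decide) 1 (by decide) (by decide)
  have k02 := key {0,1,2} (by decide) 0 (by decide) 2 (by decide) (by decide)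
  have k12 := key {0,1,2} (by decide) 1 (by decide) 2 (by decide) (by decide)
  have k03 := key {0,3,4} (by decide) 0 (by decide) 3 (by decide) (by decide)
  have k04 := key {0,3,4} (by decide) 0 (by decide) 4 (by decide) (by decide)
  have k34 := key {0,3,4} (by decide) 3 (by decide) 4 (by decide) (by decide)
  have k05 := key {0,3,5} (by decide) 0 (by decide) 5 (by decide) (by decide)
  have k35 := key {0,3,5} (by decide) 3 (by decide) 5 (by decide) (by decide)
  have k45 := key {0,4,5} (by decide) 4 (by decide) 5 (by decide) (by decide)
  have k13 := key {1,3,4} (by decide) 1 (by decide) 3 (by decide) (by decide)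
  have k14 := key {1,3,4} (by decide) 1 (by decide) 4 (by decide) (by decide)
  have k15 := key {1,3,5} (by decide) 1 (by decide) 5 (by decide) (by decide)
  have k23 := key {2,3,4} (by decide) 2 (by decide) 3 (by decide) (by decide)
  have k24 := key {2,3,4} (by decide) 2 (by decide) 4 (by decide) (by decide)
  have k25 := key {2,3,5} (by decide) 2 (by decide) 5 (by decide) (by decide)
  obtain ⟨h01, b0⟩ := k01
  obtain ⟨h02, -⟩ := k02
  obtain ⟨h12, b1⟩ := k12
  obtain ⟨h03, -⟩ := k03
  obtain ⟨h04, -⟩ := k04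
  obtain ⟨h34, b3⟩ := k34
  obtain ⟨h05, -⟩ := k05
  obtain ⟨h35, -⟩ := k35
  obtain ⟨h45, b4⟩ := k45
  obtain ⟨h13, -⟩ := k13
  obtain ⟨h14, -⟩ := k14
  obtain ⟨h15, -⟩ := k15
  obtain ⟨h23, b2⟩ := k23
  obtain ⟨h24, -⟩ := k24
  obtain ⟨h25, -⟩ := k25
  have b5 := (key {2,3,5} (by decide) 5 (by decide) 2 (by decide) (by decide)).2
  clear key
  revert h01 h02 h12 h03 h04 h34 h05 h35 h45 h13 h14 h15 h23 h24 h25 b0 b1 b2 b3 b4 b5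
  generalize (f 0 : ℕ) / k = p0
  generalize (f 1 : ℕ) / k = p1
  generalize (f 2 : ℕ) / k = p2
  generalize (f 3 : ℕ) / k = p3
  generalize (f 4 : ℕ) / k = p4
  generalize (f 5 : ℕ) / k = p5
  intros
  omega

set_option maxHeartbeats 1000000 in
lemma blow_codeg (hk : 0 < k) (h5 : 5 * k ≤ n) {S : Finset (Fin n)} (hS : S.card = 2)
    (hpos : 0 < coDeg (blowE n k) S) : 3 * k ≤ coDeg (blowE n k) S := by
  obtain ⟨x, y, hxy, rfl⟩ := Finset.card_eq_two.1 hS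
  obtain ⟨e, he⟩ := Finset.card_pos.1 hpos
  rw [Finset.mem_filter] at he
  obtain ⟨heE, hsub⟩ := he
  obtain ⟨hecard, helt, heinj⟩ := blow_mem heE
  have hx : x ∈ e := hsub (by simp)
  have hy : y ∈ e := hsub (by simp)
  have hx5 : (x : ℕ) < 5 * k := helt _ hx
  have hy5 : (y : ℕ) < 5 * k := helt _ hy
  have hpxy : (x : ℕ) / k ≠ (y : ℕ) / k := fun h => hxy (heinj hx hy h)
  have hpx : (x : ℕ) / k < 5 := (Nat.div_lt_iff_lt_mul hk).2 (by omega)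
  have hpy : (y : ℕ) / k < 5 := (Nat.div_lt_iff_lt_mul hk).2 (by omega)
  set l : Finset ℕ := ({0, 1, 2, 3, 4} : Finset ℕ) \ {(x : ℕ) / k, (y : ℕ) / k} with hl
  have hlcard : l.card = 3 := by
    rw [hl, Finset.card_sdiff_of_subset (by intro a ha; simp at ha ⊢; omega)]
    rw [Finset.card_pair hpxy]
    rfl
  set W : Finset (Fin n) :=
    Finset.univ.filter (fun w : Fin n => (w : ℕ) < 5 * k ∧ (w : ℕ) / k ∈ l) with hW
  have hWl : ∀ w ∈ W, (w : ℕ) / k ∈ l := by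
    intro w hw; rw [hW, Finset.mem_filter] at hw; exact hw.2.2
  have step1 : 3 * k ≤ W.card := by
    rw [Finset.card_eq_sum_card_fiberwise hWl]
    have hfib : ∀ j ∈ l, k ≤ (W.filter (fun w : Fin n => (w : ℕ) / k = j)).card := by
      intro j hj
      have hj4 : j ≤ 4 := by rw [hl, Finset.mem_sdiff] at hj; have := hj.1; simp at this; omega
      have hn0 : 0 < n := by omega
      refine le_trans (le_of_eq (Finset.card_range k).symm) ?_
      apply Finset.card_le_card_of_injOn
        (fun i : ℕ => (⟨(j * k + i) % n, Nat.mod_lt _ hn0⟩ : Fin n))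
      · intro i hi
        rw [Finset.mem_coe, Finset.mem_range] at hi
        have hlt : j * k + i < n := by nlinarith
        have hmod : (j * k + i) % n = j * k + i := Nat.mod_eq_of_lt hlt
        have hdiv : (j * k + i) / k = j := by
          rw [Nat.add_comm, Nat.add_mul_div_right i j hk, Nat.div_eq_of_lt hi]
          omega
        rw [Finset.mem_coe, Finset.mem_filter, Finset.mem_filter]
        refine ⟨⟨Finset.mem_univ _, ?_, ?_⟩, ?_⟩
        · show (j * k + i) % n < 5 * k
          rw [hmod]; nlinarith
        · show (j * k + i) % n / k ∈ l
          rw [hmod, hdiv]; exact hj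
        · show (j * k + i) % n / k = j
          rw [hmod, hdiv]
      · intro i hi i' hi' hii
        simp only [Finset.coe_range, Set.mem_Iio] at hi hi'
        have : (j * k + i) % n = (j * k + i') % n := by
          have := congrArg Fin.val hii; simpa using this
        rw [Nat.mod_eq_of_lt (by nlinarith), Nat.mod_eq_of_lt (by nlinarith)] at this
        omega
    calc 3 * k = ∑ _j ∈ l, k := by rw [Finset.sum_const, hlcard]; ring
    _ ≤ _ := Finset.sum_le_sum hfib
  refine le_trans step1 ?_
  rw [coDeg]
  apply Finset.card_le_card_of_injOn (fun w => ({x, y, w} : Finset (Fin n)))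
  · intro w hw
    rw [hW, Finset.mem_coe, Finset.mem_filter] at hw
    obtain ⟨-, hw5, hwl⟩ := hw
    rw [hl, Finset.mem_sdiff] at hwl
    have hwx : (w : ℕ) / k ≠ (x : ℕ) / k := by
      intro h; apply hwl.2; simp [h]
    have hwy : (w : ℕ) / k ≠ (y : ℕ) / k := by
      intro h; apply hwl.2; simp [h]
    have hwxne : w ≠ x := fun h => hwx (by rw [h])
    have hwyne : w ≠ y := fun h => hwy (by rw [h])
    rw [Finset.mem_coe, Finset.mem_filter]
    constructor
    · rw [blowE, Finset.mem_filter, Finset.mem_powersetCard_univ]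
      refine ⟨?_, ?_, ?_⟩
      · rw [Finset.card_insert_of_notMem (by simp; tauto),
          Finset.card_insert_of_notMem (by simp; tauto), Finset.card_singleton]
      · intro v hv; simp at hv
        rcases hv with rfl | rfl | rfl <;> assumption
      · rw [Finset.image_insert, Finset.image_insert, Finset.image_singleton]
        rw [Finset.card_insert_of_notMem (by simp; constructor <;> [exact hpxy; exact fun h => hwx h.symm]),
          Finset.card_insert_of_notMem (by simp; exact fun h => hwy h.symm),
          Finset.card_singleton]
    · intro a ha; simp at ha ⊢; tauto
  · intro w hw w' hw' hww
    rw [hW] at hw hw'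
    simp only [Finset.coe_filter, Set.mem_setOf_eq] at hw hw'
    have hwx : w ≠ x := by
      intro h
      have : (w : ℕ) / k ∈ l := hw.2.2
      rw [hl, Finset.mem_sdiff] at this
      exact this.2 (by simp [h])
    have hwy : w ≠ y := by
      intro h
      have : (w : ℕ) / k ∈ l := hw.2.2
      rw [hl, Finset.mem_sdiff] at this
      exact this.2 (by simp [h])
    have hww' : ({x, y, w} : Finset (Fin n)) = {x, y, w'} := hww
    have : w ∈ ({x, y, w'} : Finset (Fin n)) := by rw [← hww']; simp
    rw [Finset.mem_insert, Finset.mem_insert, Finset.mem_singleton] at this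
    rcases this with h | h | h
    exacts [absurd h hwx, absurd h hwy, h]

end Lower

section Final
variable {n : ℕ}

lemma minPos_le_bound (r : ℕ) (E : Finset (Finset (Fin n))) :
    minPosCoDeg r n E ≤ Fintype.card (Finset (Fin n)) := by
  rw [minPosCoDeg]
  rcases Set.eq_empty_or_nonempty
    {d : ℕ | ∃ S : Finset (Fin n), S.card = r - 1 ∧ coDeg E S = d ∧ 0 < d} with h | h
  · rw [h, Nat.sInf_empty]; exact Nat.zero_le _
  · obtain ⟨S, -, hd, -⟩ := Nat.sInf_mem h
    rw [← hd, coDeg]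
    exact le_trans (Finset.card_le_card (Finset.filter_subset _ _)) (Finset.card_le_univ E)

lemma bddF33 : BddAbove {d : ℕ | ∃ E : Finset (Finset (Fin n)),
    (∀ e ∈ E, e.card = 3) ∧ E.Nonempty ∧ ¬ Contains F33 E ∧ minPosCoDeg 3 n E = d} := by
  refine ⟨Fintype.card (Finset (Fin n)), ?_⟩
  rintro d ⟨E, -, -, -, rfl⟩
  exact minPos_le_bound 3 E

end Final

theorem coPlusEx_F33_aux (n : ℕ) (hn : 3 ≤ n) :
    3 * (n / 5) ≤ coPlusEx 3 n F33 ∧ (coPlusEx 3 n F33 : ℝ) ≤ 3 / 4 * n := by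
  constructor
  · -- lower bound
    rcases Nat.eq_zero_or_pos (n / 5) with hk | hk
    · simp [hk]
    · have h5 : 5 * (n / 5) ≤ n := by omega
      set k := n / 5 with hkdef
      have h2k : 2 * k < n := by omega
      have hkn : k < n := by omega
      have h0n : 0 < n := by omega
      -- the blow-up is nonempty
      have hne : (blowE n k).Nonempty := by
        refine ⟨{⟨0, h0n⟩, ⟨k, hkn⟩, ⟨2 * k, h2k⟩}, ?_⟩
        have d01 : (⟨0, h0n⟩ : Fin n) ≠ ⟨k, hkn⟩ := by simp [Fin.ext_iff]; omega
        have d02 : (⟨0, h0n⟩ : Fin n) ≠ ⟨2 * k, h2k⟩ := by simp [Fin.ext_iff]; omega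
        have d12 : (⟨k, hkn⟩ : Fin n) ≠ ⟨2 * k, h2k⟩ := by simp [Fin.ext_iff]; omega
        have g0 : ((⟨0, h0n⟩ : Fin n) : ℕ) / k = 0 := by simp
        have g1 : ((⟨k, hkn⟩ : Fin n) : ℕ) / k = 1 := by simp [Nat.div_self hk]
        have g2 : ((⟨2 * k, h2k⟩ : Fin n) : ℕ) / k = 2 := by
          show 2 * k / k = 2
          rw [Nat.mul_div_cancel 2 hk]
        rw [blowE, Finset.mem_filter, Finset.mem_powersetCard_univ]
        refine ⟨?_, ?_, ?_⟩
        · rw [Finset.card_insert_of_notMem (by simp; omega),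
            Finset.card_insert_of_notMem (by simp; omega), Finset.card_singleton]
        · intro v hv
          simp only [Finset.mem_insert, Finset.mem_singleton] at hv
          rcases hv with rfl | rfl | rfl
          · show (0 : ℕ) < 5 * k; omega
          · show k < 5 * k; omega
          · show 2 * k < 5 * k; omega
        · rw [Finset.image_insert, Finset.image_insert, Finset.image_singleton,
            g0, g1, g2]
          decide
      -- min positive co-degree is at least 3k
      have h3k : 3 * k ≤ minPosCoDeg 3 n (blowE n k) := by
        obtain ⟨e1, he1⟩ := hne
        obtain ⟨x, y, z, hxy, hxz, hyz, rfl⟩ := Finset.card_eq_three.1 (blow_card _ he1)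
        have hpos : 0 < coDeg (blowE n k) {x, y} := by
          rw [coDeg, Finset.card_pos]
          exact ⟨{x, y, z}, Finset.mem_filter.2 ⟨he1, by
            intro a ha; simp at ha ⊢; tauto⟩⟩
        have hD : Set.Nonempty
            {d : ℕ | ∃ S : Finset (Fin n), S.card = 3 - 1 ∧ coDeg (blowE n k) S = d ∧ 0 < d} :=
          ⟨coDeg (blowE n k) {x, y}, {x, y}, by rw [Finset.card_pair hxy], rfl, hpos⟩
        obtain ⟨S, hS2, hSd, hSpos⟩ := Nat.sInf_mem hD
        rw [minPosCoDeg, ← hSd]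
        rw [← hSd] at hSpos
        exact blow_codeg hk h5 (by omega) hSpos
      refine le_trans h3k ?_
      rw [coPlusEx]
      exact le_csSup bddF33 ⟨blowE n k, blow_card, hne, blow_free hk, rfl⟩
  · -- upper bound
    have h0n : 0 < n := by omega
    have h1n : 1 < n := by omega
    have h2n : 2 < n := by omega
    set E0 : Finset (Finset (Fin n)) := {({⟨0, h0n⟩, ⟨1, h1n⟩, ⟨2, h2n⟩} : Finset (Fin n))}
      with hE0
    have hcards : ∀ e ∈ E0, e.card = 3 := by
      intro e he
      rw [hE0, Finset.mem_singleton] at he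
      subst he
      rw [Finset.card_insert_of_notMem (by simp [Fin.ext_iff]),
        Finset.card_insert_of_notMem (by simp [Fin.ext_iff]), Finset.card_singleton]
    have hfree0 : ¬ Contains F33 E0 := by
      rintro ⟨f, hf, hmap⟩
      have h1 := hmap {0, 1, 2} (by decide)
      have h2 := hmap {0, 3, 4} (by decide)
      rw [hE0, Finset.mem_singleton] at h1 h2
      have := Finset.image_injective hf (h1.trans h2.symm)
      exact absurd this (by decide)
    have hSne : Set.Nonempty {d : ℕ | ∃ E : Finset (Finset (Fin n)),
        (∀ e ∈ E, e.card = 3) ∧ E.Nonempty ∧ ¬ Contains F33 E ∧ minPosCoDeg 3 n E = d} :=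
      ⟨minPosCoDeg 3 n E0, E0, hcards, ⟨_, Finset.mem_singleton_self _⟩, hfree0, rfl⟩
    have hub : coPlusEx 3 n F33 ≤ 3 * n / 4 := by
      rw [coPlusEx]
      apply csSup_le hSne
      rintro d ⟨E, h3, hne', hfree, rfl⟩
      have := upper_bound E h3 hne' hfree
      omega
    have h4 : 3 * n / 4 * 4 ≤ 3 * n := Nat.div_mul_le_self _ _
    have hcast : (coPlusEx 3 n F33 : ℝ) ≤ ((3 * n / 4 : ℕ) : ℝ) := Nat.cast_le.2 hub
    have hc2 : ((3 * n / 4 : ℕ) : ℝ) * 4 ≤ 3 * (n : ℝ) := by exact_mod_cast h4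
    linarith

/-- For every `n ≥ 3`, `3·⌊n/5⌋ ≤ co⁺ex(n, F₃,₃) ≤ (3/4)·n`. -/
theorem coPlusEx_F33 (n : ℕ) (hn : 3 ≤ n) :
    3 * (n / 5) ≤ coPlusEx 3 n F33 ∧ (coPlusEx 3 n F33 : ℝ) ≤ 3 / 4 * n := by
  exact coPlusEx_F33_aux n hn
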